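/- For every diagonal embedding ρ_T = ∑_{j_1,...,j_n} T_{j_1,...,j_n} |j_1,...,j_n⟩⟨j_1,...,j_n| of a nonnegative tensor T ∈ (ℝ^d)^{⊗n}, one has nnrank(T) = seprank(ρ_T): every nonnegative decomposition of T of size r yields a separable decomposition of ρ_T of size r, and conversely. -/

import Mathlib

open scoped ComplexOrder

/-- `T` admits a nonnegative tensor decomposition with at most `r` terms. -/
def hasNNRankLE (n d : ℕ) (T : (Fin n → Fin d) → ℝ) (r : ℕ) : Prop :=
  ∃ v : Fin r → Fin n → Fin d → ℝ,
    (∀ α i j, 0 ≤ v α i j) ∧ ∀ j, T j = ∑ α, ∏ i, v α i (j i)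

/-- `ρ` admits a separable decomposition with at most `r` terms. -/
def hasSepRankLE (n d : ℕ) (ρ : Matrix (Fin n → Fin d) (Fin n → Fin d) ℂ) (r : ℕ) : Prop :=
  ∃ σ : Fin r → Fin n → Matrix (Fin d) (Fin d) ℂ,
    (∀ α i, (σ α i).PosSemidef) ∧
    ∀ j k, ρ j k = ∑ α, ∏ i, σ α i (j i) (k i)

/-- The diagonal embedding ρ_T of a tensor T. -/
noncomputable def diagEmbed (n d : ℕ) (T : (Fin n → Fin d) → ℝ) :
    Matrix (Fin n → Fin d) (Fin n → Fin d) ℂ :=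
  Matrix.of fun j k => if j = k then (T j : ℂ) else 0

lemma diag_nonneg_of_psd {m : ℕ} {M : Matrix (Fin m) (Fin m) ℂ}
    (h : M.PosSemidef) (i : Fin m) : 0 ≤ M i i := by
  exact h.diag_nonneg

theorem nnRank_eq_sepRank_diagEmbed (n d : ℕ) (T : (Fin n → Fin d) → ℝ)
    (hT : ∀ j, 0 ≤ T j) :
    (∀ r, hasNNRankLE n d T r ↔ hasSepRankLE n d (diagEmbed n d T) r) ∧
    sInf {r | hasNNRankLE n d T r} = sInf {r | hasSepRankLE n d (diagEmbed n d T) r} := by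
  have main : ∀ r, hasNNRankLE n d T r ↔ hasSepRankLE n d (diagEmbed n d T) r := by
    intro r
    constructor
    · rintro ⟨v, hv, hvT⟩
      refine ⟨fun α i => Matrix.diagonal (fun m => (v α i m : ℂ)), ?_, ?_⟩
      · intro α i
        exact Matrix.posSemidef_diagonal_iff.mpr fun m => by
          exact_mod_cast hv α i m
      · intro j k
        by_cases hjk : j = k
        · subst hjk
          simp only [diagEmbed, Matrix.of_apply, if_pos rfl, Matrix.diagonal_apply_eq]
          rw [hvT j]
          push_cast
          rfl
        · simp only [diagEmbed, Matrix.of_apply, if_neg hjk]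
          obtain ⟨i, hi⟩ : ∃ i, j i ≠ k i := by
            by_contra h
            push_neg at h
            exact hjk (funext h)
          symm
          refine Finset.sum_eq_zero fun α _ => Finset.prod_eq_zero (Finset.mem_univ i) ?_
          simp [Matrix.diagonal_apply_ne _ hi]
    · rintro ⟨σ, hσ, hσT⟩
      refine ⟨fun α i m => (σ α i m m).re, ?_, ?_⟩
      · intro α i m
        exact (Complex.nonneg_iff.mp (diag_nonneg_of_psd (hσ α i) m)).1
      · intro j
        have h := hσT j j
        simp only [diagEmbed, Matrix.of_apply, if_pos rfl] at h
        have hentry : ∀ α i, σ α i (j i) (j i) = ((σ α i (j i) (j i)).re : ℂ) := by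
          intro α i
          have := Complex.nonneg_iff.mp (diag_nonneg_of_psd (hσ α i) (j i))
          exact Complex.ext rfl (by simp [this.2])
        rw [Finset.sum_congr rfl (fun α _ => Finset.prod_congr rfl
          (fun i _ => hentry α i))] at h
        push_cast at h
        exact_mod_cast h
  exact ⟨main, by
    congr 1
    ext r
    exact main r⟩
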